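/- With the notation and hypotheses of the V-solution to the Birkhoff problem, the natural morphism G₀ ∩ V_θ^γ G → G₀/(θ'-1)G₀ induces an isomorphism from G₀ ∩ G'^0 ∩ V_θ^γ G onto the image of G₀ ∩ V_θ^γ G in G₀/(θ'-1)G₀, for every γ ∈ R. In particular, taking γ very negative, a C-basis of G₀ ∩ G'^0 maps to a C-basis of G₀/(θ'-1)G₀. -/
import Mathlib


/-- With the notation and hypotheses of the V-solution to the Birkhoff
problem (see STATEMENT 9), for every `γ ∈ ℝ` the natural map
`G₀ ∩ V^γ G → G₀/(θ'-1)G₀` induces an isomorphism of `G₀ ∩ G'⁰ ∩ V^γ G` onto the image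
of `G₀ ∩ V^γ G`; i.e. (with `K = (θ'-1)G₀ ⊆ G₀` and `mkQ` the quotient map) the images
of `G₀ ∩ G'⁰ ∩ V^γ` and of `G₀ ∩ V^γ` agree and `G₀ ∩ G'⁰ ∩ V^γ` meets `K` trivially.
In particular (`γ` very negative) a `ℂ`-basis of `G₀ ∩ G'⁰` maps to a `ℂ`-basis of
`G₀/(θ'-1)G₀`: the image of `G₀ ∩ G'⁰` is everything and it meets `K` trivially. -/
theorem stmt_10 {G : Type*} [AddCommGroup G] [Module ℂ G]
    (θ : G ≃ₗ[ℂ] G) (Dθ : G →ₗ[ℂ] G) (V : ℝ → Submodule ℂ G)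
    (hVdec : ∀ γ γ' : ℝ, γ ≤ γ' → V γ' ≤ V γ)
    (hVθ : ∀ γ : ℝ, Submodule.map (θ : G →ₗ[ℂ] G) (V γ) = V (γ + 1))
    (G₀ Gp0 : Submodule ℂ G)
    (hG₀θ' : ∀ x ∈ G₀, θ.symm x ∈ G₀)
    (hlattice : ∀ x : G, ∃ n : ℕ, ((θ.symm : G →ₗ[ℂ] G) ^ n) x ∈ G₀)
    (hexh : ∀ (γ : ℝ) (x : G), x ∈ G₀ → ∃ ℓ : ℕ, x ∈ V (γ - ℓ))
    (hvanish : ∃ Γ : ℝ, ∀ γ : ℝ, Γ ≤ γ → G₀ ⊓ V γ = ⊥)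
    (hGp0θ : ∀ x ∈ Gp0, θ x ∈ Gp0)
    (hGp0D : ∀ x ∈ Gp0, Dθ x ∈ Gp0)
    (hGp0full : ∀ x : G, x ∈ ⨆ n : ℤ,
      Submodule.map ((θ ^ n : G ≃ₗ[ℂ] G) : G →ₗ[ℂ] G) Gp0)
    (hsol : ∀ γ : ℝ, G₀ ⊓ V γ =
      ⨆ j : ℕ, Submodule.map ((θ.symm : G →ₗ[ℂ] G) ^ j) (G₀ ⊓ Gp0 ⊓ V (γ + j)))
    (hindep : ∀ (γ : ℝ) (j : ℕ),
      Disjoint (Submodule.map ((θ.symm : G →ₗ[ℂ] G) ^ j) (G₀ ⊓ Gp0 ⊓ V (γ + j)))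
        (⨆ j' : ℕ, ⨆ _ : j' ≠ j,
          Submodule.map ((θ.symm : G →ₗ[ℂ] G) ^ j') (G₀ ⊓ Gp0 ⊓ V (γ + j'))))
    (K : Submodule ℂ ↥G₀)
    (hK : ∀ x : ↥G₀, x ∈ K ↔ ∃ y ∈ G₀, θ.symm y - y = (x : G)) :
    (∀ γ : ℝ,
      Submodule.map K.mkQ (Submodule.comap G₀.subtype (Gp0 ⊓ V γ))
        = Submodule.map K.mkQ (Submodule.comap G₀.subtype (V γ)) ∧
      Disjoint (Submodule.comap G₀.subtype (Gp0 ⊓ V γ)) K) ∧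
    Submodule.map K.mkQ (Submodule.comap G₀.subtype Gp0) = ⊤ ∧
    Disjoint (Submodule.comap G₀.subtype Gp0) K := by
  classical
  set θ' : G →ₗ[ℂ] G := (θ.symm : G →ₗ[ℂ] G) with hθ'def
  set N : ℝ → ℕ → Submodule ℂ G :=
    fun γ j => Submodule.map (θ' ^ j) (G₀ ⊓ Gp0 ⊓ V (γ + j)) with hNdef
  set Km : Submodule ℂ G := Submodule.map G₀.subtype K with hKmdef
  -- characterize Km
  have hKm_mem : ∀ x : G, x ∈ Km ↔ ∃ y ∈ G₀, θ.symm y - y = x := by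
    intro x
    constructor
    · rintro ⟨u, hu, rfl⟩
      exact (hK u).1 hu
    · rintro ⟨y, hy, hxy⟩
      have hxG : x ∈ G₀ := by
        rw [← hxy]; exact G₀.sub_mem (hG₀θ' y hy) hy
      exact ⟨⟨x, hxG⟩, (hK _).2 ⟨y, hy, hxy⟩, rfl⟩
  have hKmK : ∀ v : ↥G₀, v ∈ K ↔ (v : G) ∈ Km := by
    intro v
    constructor
    · intro hv; exact ⟨v, hv, rfl⟩
    · rintro ⟨u, hu, h⟩
      have : v = u := Subtype.ext h.symm
      rwa [this]
  -- θ'^j preserves G₀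
  have hpowG₀ : ∀ (j : ℕ) (x : G), x ∈ G₀ → (θ' ^ j) x ∈ G₀ := by
    intro j
    induction j with
    | zero => intro x hx; simpa using hx
    | succ j ih =>
        intro x hx
        rw [pow_succ', Module.End.mul_apply]
        exact hG₀θ' _ (ih x hx)
  -- θ'^j x - x ∈ Km for x ∈ G₀
  have hKθ : ∀ (j : ℕ) (x : G), x ∈ G₀ → (θ' ^ j) x - x ∈ Km := by
    intro j
    induction j with
    | zero => intro x hx; simp
    | succ j ih =>
        intro x hx
        have h1 : θ' ((θ' ^ j) x) - (θ' ^ j) x ∈ Km :=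
          (hKm_mem _).2 ⟨(θ' ^ j) x, hpowG₀ j x hx, rfl⟩
        have h2 := ih x hx
        have h3 := Km.add_mem h1 h2
        rw [sub_add_sub_cancel] at h3
        rw [pow_succ', Module.End.mul_apply]
        exact h3
  -- N monotone in γ
  have hNmono : ∀ (γ γ' : ℝ) (j : ℕ), γ' ≤ γ → N γ j ≤ N γ' j := by
    intro γ γ' j h
    exact Submodule.map_mono (inf_le_inf_left _ (hVdec _ _ (by linarith)))
  have hN0 : ∀ γ : ℝ, (G₀ ⊓ Gp0 ⊓ V γ : Submodule ℂ G) ≤ N γ 0 := by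
    intro γ x hx
    exact ⟨x, by simpa using hx, by simp⟩
  have hN0' : ∀ γ : ℝ, N γ 0 ≤ G₀ ⊓ Gp0 ⊓ V γ := by
    rintro γ x ⟨w, hw, rfl⟩
    simpa using hw
  have hNshift : ∀ (γ : ℝ) (k : ℕ) (x : G), x ∈ N γ k →
      θ.symm x ∈ N (γ - 1) (k + 1) := by
    rintro γ k x ⟨w, hw, rfl⟩
    refine ⟨w, ⟨hw.1, ?_⟩, ?_⟩
    · have h : γ - 1 + ((k : ℕ) + 1 : ℕ) = γ + k := by push_cast; ring
      rw [h]
      exact hw.2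
    · rw [pow_succ', Module.End.mul_apply]
      rfl
  have hsolN : ∀ γ : ℝ, G₀ ⊓ V γ = ⨆ j : ℕ, N γ j := hsol
  -- Key Lemma 1 : representative in G₀ ⊓ Gp0 ⊓ V γ modulo Km
  have key1 : ∀ (γ : ℝ) (x : G), x ∈ G₀ → x ∈ V γ →
      ∃ z : G, z ∈ G₀ ∧ z ∈ Gp0 ∧ z ∈ V γ ∧ x - z ∈ Km := by
    intro γ x hxG hxV
    have hx : x ∈ ⨆ j : ℕ, N γ j := by
      rw [← hsolN γ]; exact ⟨hxG, hxV⟩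
    rw [Submodule.mem_iSup_iff_exists_finsupp] at hx
    obtain ⟨f, hf, hsum⟩ := hx
    choose w hw hweq using fun j => Submodule.mem_map.mp (hf j)
    refine ⟨∑ j ∈ f.support, w j, ?_, ?_, ?_, ?_⟩
    · exact Submodule.sum_mem _ fun j _ => (hw j).1.1
    · exact Submodule.sum_mem _ fun j _ => (hw j).1.2
    · exact Submodule.sum_mem _ fun j _ =>
        hVdec γ (γ + j) (le_add_of_nonneg_right (Nat.cast_nonneg j)) (hw j).2
    · have hx' : x = ∑ j ∈ f.support, f j := hsum.symm
      rw [hx', ← Finset.sum_sub_distrib]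
      refine Submodule.sum_mem _ fun j _ => ?_
      rw [← hweq j]
      exact hKθ j (w j) (hw j).1.1
  -- uniqueness of decompositions
  have keyU : ∀ (γ : ℝ) (n : ℕ) (g : ℕ → G), (∀ j, g j ∈ N γ j) →
      (∑ j ∈ Finset.range n, g j = 0) → ∀ j < n, g j = 0 := by
    intro γ n g hg hgsum j hj
    have hjmem : j ∈ Finset.range n := Finset.mem_range.mpr hj
    have h2 : g j = -∑ j' ∈ (Finset.range n).erase j, g j' := by
      have h := Finset.add_sum_erase (Finset.range n) g hjmem
      rw [hgsum] at h
      exact eq_neg_of_add_eq_zero_left h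
    have h3 : g j ∈ ⨆ j' : ℕ, ⨆ _ : j' ≠ j, N γ j' := by
      rw [h2]
      refine neg_mem (Submodule.sum_mem _ fun j' hj' => ?_)
      exact Submodule.mem_iSup_of_mem j'
        (Submodule.mem_iSup_of_mem (Finset.ne_of_mem_erase hj') (hg j'))
    exact (Submodule.disjoint_def.mp (hindep γ j)) (g j) (hg j) h3
  -- Key Lemma 2 : G₀ ⊓ Gp0 meets Km trivially
  have key2 : ∀ x : G, x ∈ G₀ → x ∈ Gp0 → x ∈ Km → x = 0 := by
    intro x hxG hxP hxK
    obtain ⟨y, hyG, hyx⟩ := (hKm_mem x).1 hxK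
    obtain ⟨ℓ₁, hx1⟩ := hexh 0 x hxG
    obtain ⟨ℓ₂, hy1⟩ := hexh 0 y hyG
    set γ : ℝ := min (0 - (ℓ₁ : ℝ)) (0 - (ℓ₂ : ℝ)) with hγdef
    have hxV : x ∈ V γ := hVdec _ _ (min_le_left _ _) hx1
    have hyV : y ∈ V γ := hVdec _ _ (min_le_right _ _) hy1
    have hy2 : y ∈ ⨆ j : ℕ, N γ j := by rw [← hsolN γ]; exact ⟨hyG, hyV⟩
    rw [Submodule.mem_iSup_iff_exists_finsupp] at hy2
    obtain ⟨f, hf, hfsum⟩ := hy2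
    set n : ℕ := f.support.sup id + 1 with hndef
    have hfn : ∀ m : ℕ, n ≤ m → f m = 0 := by
      intro m hm
      by_contra hne
      have hmem : m ∈ f.support := Finsupp.mem_support_iff.mpr hne
      have := Finset.le_sup (f := id) hmem
      simp only [id] at this
      omega
    have hsupp : f.support ⊆ Finset.range n := by
      intro m hm
      rw [Finset.mem_range]
      by_contra h
      exact (Finsupp.mem_support_iff.mp hm) (hfn m (by omega))
    have hysum : ∀ m : ℕ, n ≤ m → ∑ k ∈ Finset.range m, f k = y := by
      intro m hm
      rw [← hfsum]
      rw [Finsupp.sum]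
      exact (Finset.sum_subset (hsupp.trans (Finset.range_subset_range.mpr hm))
        (fun k _ hk => Finsupp.notMem_support_iff.mp hk)).symm
    -- the shifted decomposition
    set g : ℕ → G := fun j => Nat.rec (-(f 0) - x) (fun k _ => θ.symm (f k) - f (k + 1)) j
      with hgdef
    have hg0 : g 0 = -(f 0) - x := rfl
    have hgs : ∀ k : ℕ, g (k + 1) = θ.symm (f k) - f (k + 1) := fun k => rfl
    have hgmem : ∀ j : ℕ, g j ∈ N (γ - 1) j := by
      intro j
      cases j with
      | zero =>
          rw [hg0]
          refine hN0 (γ - 1) ?_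
          have hf0 : f 0 ∈ G₀ ⊓ Gp0 ⊓ V γ := hN0' γ (by simpa using hf 0)
          refine ⟨⟨?_, ?_⟩, ?_⟩
          · exact Submodule.sub_mem _ (neg_mem hf0.1.1) hxG
          · exact Submodule.sub_mem _ (neg_mem hf0.1.2) hxP
          · exact Submodule.sub_mem _ (neg_mem (hVdec _ _ (by linarith) hf0.2))
              (hVdec _ _ (by linarith) hxV)
      | succ k =>
          rw [hgs k]
          refine Submodule.sub_mem _ (hNshift γ k (f k) (hf k)) ?_
          exact hNmono γ (γ - 1) (k + 1) (by linarith) (hf (k + 1))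
    have hgsum : ∑ j ∈ Finset.range (n + 1), g j = 0 := by
      rw [Finset.sum_range_succ']
      simp only [hgs, hg0]
      rw [Finset.sum_sub_distrib]
      have e1 : ∑ k ∈ Finset.range n, θ.symm (f k) = θ.symm y := by
        rw [← map_sum, hysum n le_rfl]
      have e2 : ∑ k ∈ Finset.range n, f (k + 1) = y - f 0 := by
        have h := Finset.sum_range_succ' f n
        rw [hysum (n + 1) (by omega)] at h
        exact eq_sub_of_add_eq h.symm
      rw [e1, e2, ← hyx]
      abel
    have hgz : ∀ j < n + 1, g j = 0 := keyU (γ - 1) (n + 1) g hgmem hgsum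
    have hstep : ∀ k : ℕ, f (k + 1) = θ.symm (f k) := by
      intro k
      by_cases h : k + 1 < n + 1
      · have := hgz (k + 1) h
        rw [hgs k] at this
        exact (sub_eq_zero.mp this).symm
      · rw [hfn (k + 1) (by omega), hfn k (by omega)]
        simp
    have hf0 : f 0 = 0 := by
      by_contra hne
      have hall : ∀ k : ℕ, f k ≠ 0 := by
        intro k
        induction k with
        | zero => exact hne
        | succ k ih =>
            rw [hstep k]
            intro h
            exact ih (by simpa using congrArg θ h)
      exact hall n (hfn n le_rfl)
    have h0 := hgz 0 (by omega)
    rw [hg0, hf0] at h0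
    have : -x = 0 := by simpa using h0
    simpa using this
  -- assembling the statement
  have hdisj : ∀ (γ : ℝ), Disjoint (Submodule.comap G₀.subtype Gp0) K := by
    intro _
    rw [Submodule.disjoint_def]
    intro v hv hvK
    have hx : (v : G) = 0 := key2 v v.2 hv ((hKmK v).1 hvK)
    exact Subtype.ext hx
  refine ⟨fun γ => ⟨?_, ?_⟩, ?_, ?_⟩
  · apply le_antisymm
    · exact Submodule.map_mono (Submodule.comap_mono inf_le_right)
    · rintro u hu
      rw [Submodule.mem_map] at hu
      obtain ⟨v, hv, rfl⟩ := hu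
      have hvV : (v : G) ∈ V γ := hv
      obtain ⟨z, hzG, hzP, hzV, hzK⟩ := key1 γ (v : G) v.2 hvV
      refine Submodule.mem_map.mpr ⟨⟨z, hzG⟩, ⟨hzP, hzV⟩, ?_⟩
      rw [Submodule.mkQ_apply, Submodule.mkQ_apply, Submodule.Quotient.eq]
      rw [hKmK]
      have : ((⟨z, hzG⟩ - v : ↥G₀) : G) = -((v : G) - z) := by
        simp
      rw [this]
      exact neg_mem hzK
  · exact Disjoint.mono_left (Submodule.comap_mono inf_le_left) (hdisj γ)
  · rw [Submodule.eq_top_iff']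
    intro u
    obtain ⟨v, rfl⟩ := K.mkQ_surjective u
    obtain ⟨ℓ, hvV⟩ := hexh 0 (v : G) v.2
    obtain ⟨z, hzG, hzP, hzV, hzK⟩ := key1 (0 - ℓ) (v : G) v.2 hvV
    refine Submodule.mem_map.mpr ⟨⟨z, hzG⟩, hzP, ?_⟩
    rw [Submodule.mkQ_apply, Submodule.mkQ_apply, Submodule.Quotient.eq]
    rw [hKmK]
    have : ((⟨z, hzG⟩ - v : ↥G₀) : G) = -((v : G) - z) := by simp
    rw [this]
    exact neg_mem hzK
  · exact hdisj 0
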